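/- Let A and B be independent nonnegative random variables on a probability space with B integrable and E[B] ≤ 1. Then E[min(1, AB)] ≤ E[min(1, A)]. -/

import Mathlib

open MeasureTheory ProbabilityTheory

/-- For independent nonnegative random variables `A`, `B` with `B` integrable and
`E[B] ≤ 1`, one has `E[min(1, A*B)] ≤ E[min(1, A)]`. -/
theorem expectation_min_one_mul_le_of_expectation_le_one
    {Ω : Type*} [MeasurableSpace Ω] (μ : Measure Ω) [IsProbabilityMeasure μ]
    (A B : Ω → ℝ) (hA : Measurable A) (hB : Measurable B)
    (hA0 : ∀ ω, 0 ≤ A ω) (hB0 : ∀ ω, 0 ≤ B ω)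
    (hBint : Integrable B μ) (hEB : ∫ ω, B ω ∂μ ≤ 1)
    (hind : IndepFun A B μ) :
    ∫ ω, min 1 (A ω * B ω) ∂μ ≤ ∫ ω, min 1 (A ω) ∂μ := by
  set f : ℝ → ℝ := fun x => if x ≤ 1 then x else 0 with hf
  have hfm : Measurable f := Measurable.ite measurableSet_Iic measurable_id measurable_const
  set S : Ω → ℝ := fun ω => f (A ω) with hS
  have hSm : Measurable S := hfm.comp hA
  have hS0 : ∀ ω, 0 ≤ S ω := by
    intro ω; simp only [hS, hf]
    split <;> [exact hA0 ω; exact le_refl 0]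
  have hS1 : ∀ ω, S ω ≤ 1 := by
    intro ω; simp only [hS, hf]
    split <;> simp_all
  -- pointwise bound
  have key : ∀ ω, min 1 (A ω * B ω) ≤ min 1 (A ω) + S ω * (B ω - 1) := by
    intro ω
    simp only [hS, hf]
    by_cases h : A ω ≤ 1
    · simp only [h, if_pos, min_eq_right h]
      have : A ω + A ω * (B ω - 1) = A ω * B ω := by ring
      rw [this]
      exact min_le_right _ _
    · simp only [h, if_neg, not_false_iff]
      push_neg at h
      rw [min_eq_left h.le]
      simp [min_le_left]
  -- integrability
  have hABm : Measurable fun ω => min 1 (A ω * B ω) :=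
    measurable_const.min (hA.mul hB)
  have hAB_int : Integrable (fun ω => min 1 (A ω * B ω)) μ := by
    refine (integrable_const (1 : ℝ)).mono' hABm.aestronglyMeasurable ?_
    filter_upwards with ω
    rw [Real.norm_eq_abs, abs_of_nonneg (le_min zero_le_one (mul_nonneg (hA0 ω) (hB0 ω)))]
    exact min_le_left _ _
  have hA_int : Integrable (fun ω => min 1 (A ω)) μ := by
    refine (integrable_const (1 : ℝ)).mono' (measurable_const.min hA).aestronglyMeasurable ?_
    filter_upwards with ω
    rw [Real.norm_eq_abs, abs_of_nonneg (le_min zero_le_one (hA0 ω))]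
    exact min_le_left _ _
  have hSB_int : Integrable (fun ω => S ω * (B ω - 1)) μ := by
    refine ((hBint.sub (integrable_const 1)).abs).mono' (hSm.mul (hB.sub measurable_const)).aestronglyMeasurable ?_
    filter_upwards with ω
    simp only [Pi.abs_apply, Pi.sub_apply]
    rw [Real.norm_eq_abs, abs_mul]
    calc |S ω| * |B ω - 1| ≤ 1 * |B ω - 1| := by
          apply mul_le_mul_of_nonneg_right _ (abs_nonneg _)
          rw [abs_of_nonneg (hS0 ω)]; exact hS1 ω
      _ = |B ω - 1| := one_mul _
  -- independence
  have hindS : IndepFun S B μ := hind.comp hfm measurable_id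
  have hmul : ∫ ω, S ω * (B ω - 1) ∂μ = (∫ ω, S ω ∂μ) * ∫ ω, (B ω - 1) ∂μ := by
    have : IndepFun S (fun ω => B ω - 1) μ :=
      hindS.comp measurable_id (measurable_id.sub measurable_const)
    exact this.integral_fun_mul_eq_mul_integral
      ((integrable_const (1:ℝ)).mono' hSm.aestronglyMeasurable (by
        filter_upwards with ω; rw [Real.norm_eq_abs, abs_of_nonneg (hS0 ω)]; exact hS1 ω)).aestronglyMeasurable
      (hBint.sub (integrable_const 1)).aestronglyMeasurable
  have hEB1 : ∫ ω, (B ω - 1) ∂μ ≤ 0 := by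
    rw [integral_sub hBint (integrable_const 1)]
    simp only [integral_const, probReal_univ, smul_eq_mul, one_mul]
    linarith
  have hSnn : 0 ≤ ∫ ω, S ω ∂μ := integral_nonneg hS0
  calc ∫ ω, min 1 (A ω * B ω) ∂μ
      ≤ ∫ ω, (min 1 (A ω) + S ω * (B ω - 1)) ∂μ :=
        integral_mono hAB_int (hA_int.add hSB_int) key
    _ = (∫ ω, min 1 (A ω) ∂μ) + ∫ ω, S ω * (B ω - 1) ∂μ := integral_add hA_int hSB_int
    _ ≤ ∫ ω, min 1 (A ω) ∂μ := by
        rw [hmul]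
        nlinarith [mul_nonpos_of_nonneg_of_nonpos hSnn hEB1]
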